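/- Let $X$ be a Banach space, let $(C_n)$ be a nondecreasing sequence of uniformly bounded weak-star closed convex subsets of $X^*$, and set $C := \mathrm{cl}^{w^*}(\bigcup_n C_n)$. Define $f_n := \sigma_{C_n}$ and $f := \sigma_C$ (support functions, viewed as functions on $X$). Then: (i) $f = \Gamma\text{-}\liminf_n f_n$ in the norm topology; (ii) $f_n^* = \delta_{C_n}$ and $f^* = \delta_C$; (iii) for every $x^* \in C \setminus \mathrm{Ls}_{w^*} C_n$, one has $f^*(x^*) = 0$ but $\Gamma(w^*)\text{-}\limsup_n f_n^*(x^*) = +\infty$. -/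
import Mathlib


open Filter Topology

noncomputable section

variable {X : Type*} [NormedAddCommGroup X] [NormedSpace ℝ X]

/-- Fenchel conjugate of `f : X → EReal`, as a function on the dual. -/
def fconj (f : X → EReal) (p : X →L[ℝ] ℝ) : EReal :=
  ⨆ x : X, ((p x : ℝ) : EReal) - f x

/-- `f` is a proper convex lower semicontinuous function with values in `ℝ ∪ {∞}`. -/
def IsPLC (f : X → EReal) : Prop :=
  (∃ x, f x ≠ ⊤) ∧ (∀ x, f x ≠ ⊥) ∧
    Convex ℝ {q : X × ℝ | f q.1 ≤ (q.2 : EReal)} ∧ LowerSemicontinuous f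

/-- Sequential Γ-liminf in the norm topology. -/
def gLiminf (f : ℕ → X → EReal) (x : X) : EReal :=
  ⨅ (u : ℕ → X) (_ : Tendsto u atTop (𝓝 x)), liminf (fun n => f n (u n)) atTop

/-- Sequential Γ-limsup in the norm topology. -/
def gLimsup (f : ℕ → X → EReal) (x : X) : EReal :=
  ⨅ (u : ℕ → X) (_ : Tendsto u atTop (𝓝 x)), limsup (fun n => f n (u n)) atTop

/-- Weak-star convergence of a sequence of continuous linear functionals. -/
def WStarTendsto (u : ℕ → X →L[ℝ] ℝ) (p : X →L[ℝ] ℝ) : Prop :=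
  ∀ x : X, Tendsto (fun n => u n x) atTop (𝓝 (p x))

/-- Sequential Γ-liminf in the weak-star topology of the dual. -/
def gLiminfW (g : ℕ → (X →L[ℝ] ℝ) → EReal) (p : X →L[ℝ] ℝ) : EReal :=
  ⨅ (u : ℕ → X →L[ℝ] ℝ) (_ : WStarTendsto u p), liminf (fun n => g n (u n)) atTop

/-- Sequential Γ-limsup in the weak-star topology of the dual. -/
def gLimsupW (g : ℕ → (X →L[ℝ] ℝ) → EReal) (p : X →L[ℝ] ℝ) : EReal :=
  ⨅ (u : ℕ → X →L[ℝ] ℝ) (_ : WStarTendsto u p), limsup (fun n => g n (u n)) atTop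

/-- Graph of the convex subdifferential. -/
def subdiff (f : X → EReal) : Set (X × (X →L[ℝ] ℝ)) :=
  {q | f q.1 + fconj f q.2 = ((q.2 q.1 : ℝ) : EReal)}

/-- Graph of the Fenchel subdifferential of an arbitrary function. -/
def fenSubdiff (g : X → EReal) : Set (X × (X →L[ℝ] ℝ)) :=
  {q | g q.1 ≠ ⊤ ∧ ∀ u : X, ((q.2 u - q.2 q.1 : ℝ) : EReal) + g q.1 ≤ g u}

/-- Moreau envelope. -/
def moreau (f : X → EReal) (lam : ℝ) (x : X) : EReal :=
  ⨅ y : X, f y + ((1 / (2 * lam) * ‖x - y‖ ^ 2 : ℝ) : EReal)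


attribute [local instance] Classical.propDecidable

/-- The weak-star closure of a set of functionals, described via the canonical
neighborhood basis of the weak-star topology. -/
def wstarClosure {X : Type*} [NormedAddCommGroup X] [NormedSpace ℝ X]
    (S : Set (X →L[ℝ] ℝ)) : Set (X →L[ℝ] ℝ) :=
  {φ | ∀ (F : Finset X) (ε : ℝ), 0 < ε → ∃ ψ ∈ S, ∀ b ∈ F, |φ b - ψ b| < ε}

/-- Sequential weak-star upper limit of a sequence of sets of functionals. -/
def LsWstar {X : Type*} [NormedAddCommGroup X] [NormedSpace ℝ X]
    (C : ℕ → Set (X →L[ℝ] ℝ)) : Set (X →L[ℝ] ℝ) :=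
  {φ | ∃ j : ℕ → ℕ, StrictMono j ∧ ∃ y : ℕ → X →L[ℝ] ℝ,
    (∀ n, y n ∈ C (j n)) ∧ WStarTendsto y φ}

/-- Support function (on `X`) of a set of functionals. -/
def suppD {X : Type*} [NormedAddCommGroup X] [NormedSpace ℝ X]
    (D : Set (X →L[ℝ] ℝ)) (x : X) : EReal :=
  ⨆ p ∈ D, ((p x : ℝ) : EReal)

lemma subset_wstarClosure (S : Set (X →L[ℝ] ℝ)) : S ⊆ wstarClosure S := by
  intro φ hφ F ε hε
  exact ⟨φ, hφ, fun b _ => by simpa using hε⟩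

lemma wstarClosure_idem (S : Set (X →L[ℝ] ℝ)) :
    wstarClosure (wstarClosure S) = wstarClosure S := by
  refine Set.Subset.antisymm ?_ (subset_wstarClosure _)
  intro φ hφ F ε hε
  obtain ⟨ψ, hψ, h1⟩ := hφ F (ε / 2) (by linarith)
  obtain ⟨χ, hχ, h2⟩ := hψ F (ε / 2) (by linarith)
  refine ⟨χ, hχ, fun b hb => ?_⟩
  calc |φ b - χ b| ≤ |φ b - ψ b| + |ψ b - χ b| := abs_sub_le _ _ _
    _ < ε / 2 + ε / 2 := add_lt_add (h1 b hb) (h2 b hb)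
    _ = ε := by ring

lemma wstarClosure_convex {S : Set (X →L[ℝ] ℝ)} (hS : Convex ℝ S) :
    Convex ℝ (wstarClosure S) := by
  intro φ₁ h₁ φ₂ h₂ a b ha hb hab F ε hε
  obtain ⟨ψ₁, hψ₁, hc₁⟩ := h₁ F (ε / 2) (by linarith)
  obtain ⟨ψ₂, hψ₂, hc₂⟩ := h₂ F (ε / 2) (by linarith)
  refine ⟨a • ψ₁ + b • ψ₂, hS hψ₁ hψ₂ ha hb hab, fun x hx => ?_⟩
  have e1 : (a • φ₁ + b • φ₂) x - (a • ψ₁ + b • ψ₂) x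
      = a * (φ₁ x - ψ₁ x) + b * (φ₂ x - ψ₂ x) := by
    simp [ContinuousLinearMap.add_apply, ContinuousLinearMap.smul_apply]; ring
  rw [e1]
  calc |a * (φ₁ x - ψ₁ x) + b * (φ₂ x - ψ₂ x)|
      ≤ |a * (φ₁ x - ψ₁ x)| + |b * (φ₂ x - ψ₂ x)| := abs_add_le _ _
    _ = a * |φ₁ x - ψ₁ x| + b * |φ₂ x - ψ₂ x| := by
        rw [abs_mul, abs_mul, abs_of_nonneg ha, abs_of_nonneg hb]
    _ ≤ a * (ε / 2) + b * (ε / 2) := by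
        have g1 := hc₁ x hx
        have g2 := hc₂ x hx
        have := abs_nonneg (φ₁ x - ψ₁ x)
        have := abs_nonneg (φ₂ x - ψ₂ x)
        nlinarith
    _ = ε / 2 := by nlinarith
    _ < ε := by linarith

lemma sep_lemma {D : Set (X →L[ℝ] ℝ)} (hconv : Convex ℝ D)
    (hcl : wstarClosure D = D) {p : X →L[ℝ] ℝ} (hp : p ∉ D) :
    ∃ (x : X) (c : ℝ), (∀ ψ ∈ D, ψ x ≤ c) ∧ c < p x := by
  rw [← hcl] at hp
  simp only [wstarClosure, Set.mem_setOf_eq] at hp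
  push_neg at hp
  obtain ⟨F, ε, hε, hsep⟩ := hp
  -- the finite dimensional space
  let E := {b // b ∈ F} → ℝ
  let T : (X →L[ℝ] ℝ) →ₗ[ℝ] E :=
    { toFun := fun ψ b => ψ (b : X)
      map_add' := fun ψ χ => rfl
      map_smul' := fun c ψ => rfl }
  have hA : Convex ℝ (closure (T '' D)) := (hconv.linear_image T).closure
  have hTp : T p ∉ closure (T '' D) := by
    intro hmem
    rw [Metric.mem_closure_iff] at hmem
    obtain ⟨v, hv, hdist⟩ := hmem ε hε
    obtain ⟨ψ, hψD, rfl⟩ := hv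
    obtain ⟨b, hbF, hb⟩ := hsep ψ hψD
    have h1 : dist (T p ⟨b, hbF⟩) (T ψ ⟨b, hbF⟩) ≤ dist (T p) (T ψ) :=
      dist_le_pi_dist (T p) (T ψ) ⟨b, hbF⟩
    rw [Real.dist_eq] at h1
    have : (ε : ℝ) ≤ dist (T p) (T ψ) := le_trans (by simpa [T] using hb) h1
    linarith
  obtain ⟨f, u, hfa, hfu⟩ :=
    geometric_hahn_banach_closed_point hA isClosed_closure hTp
  -- basis vectors
  let e : {b // b ∈ F} → E := fun i => fun j => if i = j then (1 : ℝ) else 0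
  let x₀ : X := ∑ b : {b // b ∈ F}, f (e b) • (b : X)
  have key : ∀ ψ : X →L[ℝ] ℝ, ψ x₀ = f (T ψ) := by
    intro ψ
    have h1 : ψ x₀ = ∑ b : {b // b ∈ F}, f (e b) * ψ (b : X) := by
      simp [x₀, map_sum, smul_eq_mul]
    have h2 : f (T ψ) = ∑ b : {b // b ∈ F}, (T ψ b) * f (e b) := by
      conv_lhs => rw [pi_eq_sum_univ (T ψ)]
      rw [map_sum]
      simp [smul_eq_mul, e]
    rw [h1, h2]
    apply Finset.sum_congr rfl
    intro b _
    simp [T]; ring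
  refine ⟨x₀, u, fun ψ hψ => ?_, ?_⟩
  · rw [key ψ]
    exact le_of_lt (hfa (T ψ) (subset_closure (Set.mem_image_of_mem T hψ)))
  · rw [key p]; exact hfu

lemma fconj_suppD_eq {D : Set (X →L[ℝ] ℝ)} (hconv : Convex ℝ D)
    (hcl : wstarClosure D = D) (p : X →L[ℝ] ℝ) :
    fconj (suppD D) p = if p ∈ D then (0 : EReal) else ⊤ := by
  split_ifs with hp
  · apply le_antisymm
    · apply iSup_le
      intro x
      have h1 : ((p x : ℝ) : EReal) ≤ suppD D x := le_iSup₂ (f := fun q (_ : q ∈ D) => ((q x : ℝ) : EReal)) p hp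
      calc ((p x : ℝ) : EReal) - suppD D x
          ≤ ((p x : ℝ) : EReal) - ((p x : ℝ) : EReal) := EReal.sub_le_sub le_rfl h1
        _ = 0 := by rw [← EReal.coe_sub]; simp
    · have h0 : suppD D 0 = 0 := by
        apply le_antisymm
        · exact iSup₂_le fun q _ => by simp
        · have h := le_iSup₂ (f := fun q (_ : q ∈ D) => ((q (0 : X) : ℝ) : EReal)) p hp
          rw [show ((p (0 : X) : ℝ) : EReal) = 0 by simp] at h
          exact h
      have : (0 : EReal) = ((p (0 : X) : ℝ) : EReal) - suppD D 0 := by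
        rw [h0]; simp
      rw [this]
      exact le_iSup (fun x => ((p x : ℝ) : EReal) - suppD D x) 0
  · rcases Set.eq_empty_or_nonempty D with hD | hD
    · have hbot : ∀ x : X, suppD D x = ⊥ := by
        intro x; simp [suppD, hD]
      rw [eq_top_iff]
      calc (⊤ : EReal) = ((p 0 : ℝ) : EReal) - suppD D 0 := by
            rw [hbot 0, EReal.coe_sub_bot]
        _ ≤ fconj (suppD D) p := le_iSup (fun x => ((p x : ℝ) : EReal) - suppD D x) 0
    · obtain ⟨x, c, hle, hgt⟩ := sep_lemma hconv hcl hp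
      rw [EReal.eq_top_iff_forall_lt]
      intro r
      have hd : 0 < p x - c := by linarith
      obtain ⟨n, hn⟩ := exists_nat_gt (r / (p x - c))
      have hr : r < (n : ℝ) * (p x - c) := by
        rw [div_lt_iff₀ hd] at hn; linarith
      have hsupp : suppD D ((n : ℝ) • x) ≤ (((n : ℝ) * c : ℝ) : EReal) := by
        apply iSup₂_le
        intro q hq
        have : q ((n : ℝ) • x) ≤ (n : ℝ) * c := by
          rw [map_smul, smul_eq_mul]
          exact mul_le_mul_of_nonneg_left (hle q hq) (Nat.cast_nonneg n)
        exact_mod_cast EReal.coe_le_coe_iff.mpr this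
      have hterm : (((n : ℝ) * (p x - c) : ℝ) : EReal)
          ≤ ((p ((n : ℝ) • x) : ℝ) : EReal) - suppD D ((n : ℝ) • x) := by
        have h1 : ((p ((n : ℝ) • x) : ℝ) : EReal) = (((n : ℝ) * p x : ℝ) : EReal) := by
          rw [map_smul, smul_eq_mul]
        rw [h1]
        calc (((n : ℝ) * (p x - c) : ℝ) : EReal)
            = (((n : ℝ) * p x : ℝ) : EReal) - (((n : ℝ) * c : ℝ) : EReal) := by
              rw [← EReal.coe_sub]; norm_cast; ring
          _ ≤ (((n : ℝ) * p x : ℝ) : EReal) - suppD D ((n : ℝ) • x) :=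
              EReal.sub_le_sub le_rfl hsupp
      calc (r : EReal) < (((n : ℝ) * (p x - c) : ℝ) : EReal) := EReal.coe_lt_coe_iff.mpr hr
        _ ≤ ((p ((n : ℝ) • x) : ℝ) : EReal) - suppD D ((n : ℝ) • x) := hterm
        _ ≤ fconj (suppD D) p := le_iSup (fun y => ((p y : ℝ) : EReal) - suppD D y) _

/-- Counterexample outside the WCG setting: support functions of a nondecreasing,
uniformly bounded sequence of weak-star closed convex sets. -/
theorem stmt16 {X : Type*} [NormedAddCommGroup X] [NormedSpace ℝ X] [CompleteSpace X]
    (C : ℕ → Set (X →L[ℝ] ℝ)) (hmono : Monotone C)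
    (hclosed : ∀ n, wstarClosure (C n) = C n)
    (hconv : ∀ n, Convex ℝ (C n))
    (M : ℝ) (hbdd : ∀ n, ∀ p ∈ C n, ‖p‖ ≤ M) :
    (∀ x : X, gLiminf (fun n => suppD (C n)) x =
        suppD (wstarClosure (⋃ n, C n)) x) ∧
    (∀ (n : ℕ) (p : X →L[ℝ] ℝ),
        fconj (suppD (C n)) p = if p ∈ C n then (0 : EReal) else ⊤) ∧
    (∀ p : X →L[ℝ] ℝ,
        fconj (suppD (wstarClosure (⋃ n, C n))) p =
          if p ∈ wstarClosure (⋃ n, C n) then (0 : EReal) else ⊤) ∧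
    (∀ p : X →L[ℝ] ℝ, p ∈ wstarClosure (⋃ n, C n) → p ∉ LsWstar C →
        fconj (suppD (wstarClosure (⋃ n, C n))) p = 0 ∧
        gLimsupW (fun n => fconj (suppD (C n))) p = ⊤) := by
  set D := wstarClosure (⋃ n, C n) with hDdef
  have hsubD : ∀ n, C n ⊆ D := fun n =>
    (Set.subset_iUnion C n).trans (subset_wstarClosure _)
  have hconvU : Convex ℝ (⋃ n, C n) := by
    intro φ₁ h₁ φ₂ h₂ a b ha hb hab
    obtain ⟨m, hm⟩ := Set.mem_iUnion.mp h₁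
    obtain ⟨k, hk⟩ := Set.mem_iUnion.mp h₂
    exact Set.mem_iUnion.mpr ⟨max m k,
      hconv (max m k) (hmono (le_max_left m k) hm) (hmono (le_max_right m k) hk) ha hb hab⟩
  have hconvD : Convex ℝ D := wstarClosure_convex hconvU
  have hclD : wstarClosure D = D := wstarClosure_idem _
  refine ⟨?_, ?_, ?_, ?_⟩
  · -- part (i)
    intro x
    unfold gLiminf
    apply le_antisymm
    · have h1 : (⨅ (u : ℕ → X) (_ : Tendsto u atTop (𝓝 x)),
          liminf (fun n => suppD (C n) (u n)) atTop) ≤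
          liminf (fun n => suppD (C n) x) atTop :=
        iInf₂_le (fun _ => x) tendsto_const_nhds
      refine h1.trans ?_
      have h2 : ∀ n, suppD (C n) x ≤ suppD D x := fun n =>
        iSup₂_le fun q hq =>
          le_iSup₂ (f := fun q (_ : q ∈ D) => ((q x : ℝ) : EReal)) q (hsubD n hq)
      calc liminf (fun n => suppD (C n) x) atTop
          ≤ liminf (fun _ => suppD D x) atTop := liminf_le_liminf (Eventually.of_forall h2)
        _ = suppD D x := liminf_const _
    · refine le_iInf₂ fun u hu => ?_
      set L := liminf (fun n => suppD (C n) (u n)) atTop with hL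
      refine iSup₂_le fun p hp => ?_
      have step1 : ∀ q ∈ ⋃ n, C n, ((q x : ℝ) : EReal) ≤ L := by
        intro q hq
        obtain ⟨m, hm⟩ := Set.mem_iUnion.mp hq
        have hconvq : Tendsto (fun n => ((q (u n) : ℝ) : EReal)) atTop
            (𝓝 ((q x : ℝ) : EReal)) :=
          EReal.tendsto_coe.mpr ((q.continuous.tendsto x).comp hu)
        rw [← hconvq.liminf_eq]
        refine liminf_le_liminf ?_
        filter_upwards [eventually_ge_atTop m] with n hn
        exact le_iSup₂ (f := fun r (_ : r ∈ C n) => ((r (u n) : ℝ) : EReal)) q (hmono hn hm)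
      by_contra hcon
      push_neg at hcon
      obtain ⟨c, hc1, hc2⟩ := exists_between hcon
      have hcbot : c ≠ ⊥ := (lt_of_le_of_lt bot_le hc1).ne'
      have hctop : c ≠ ⊤ := (hc2.trans_le le_top).ne
      have hcr : ((c.toReal : ℝ) : EReal) = c := EReal.coe_toReal hctop hcbot
      have hrx : c.toReal < p x := by
        rw [← EReal.coe_lt_coe_iff, hcr]; exact hc2
      obtain ⟨ψ, hψU, hψ⟩ := hp {x} (p x - c.toReal) (by linarith)
      have h3 := hψ x (Finset.mem_singleton_self x)
      have h4 : c.toReal ≤ ψ x := by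
        have habs := abs_lt.mp h3
        linarith [habs.1]
      have h5 : ((c.toReal : ℝ) : EReal) ≤ L :=
        le_trans (EReal.coe_le_coe_iff.mpr h4) (step1 ψ hψU)
      rw [hcr] at h5
      exact absurd hc1 (not_lt.mpr h5)
  · intro n p; exact fconj_suppD_eq (hconv n) (hclosed n) p
  · intro p; exact fconj_suppD_eq hconvD hclD p
  · intro p hpD hpLs
    constructor
    · rw [fconj_suppD_eq hconvD hclD p, if_pos hpD]
    · unfold gLimsupW
      refine le_antisymm le_top (le_iInf₂ fun u hu => ?_)
      have hfreq : ∃ᶠ n in atTop, u n ∉ C n := by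
        by_contra hcon
        rw [Filter.not_frequently] at hcon
        simp only [not_not] at hcon
        obtain ⟨N, hN⟩ := Filter.eventually_atTop.mp hcon
        refine hpLs ⟨fun n => n + N, fun a b hab => Nat.add_lt_add_right hab N,
          fun n => u (n + N), fun n => hN (n + N) (Nat.le_add_left N n), fun y => ?_⟩
        exact (hu y).comp (tendsto_add_atTop_nat N)
      refine le_limsup_of_frequently_le ?_
      refine hfreq.mono fun n hn => ?_
      have heq := fconj_suppD_eq (hconv n) (hclosed n) (u n)
      rw [if_neg hn] at heq
      exact heq.ge
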